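/- Let Z be a convex set, y ∈ Z \ ∂Z, and let p_y(x) = P_{Z-y}(y - x) be the Minkowski gauge of Z - y (on the linear hull of Z - y) evaluated at y - x. Then for all x ∈ Z, t_y(x) = 1/(1 + p_y(x)). -/

import Mathlib

/-- The weight function `t_y(x) = sup{ t ∈ [0,1) : (y - t·x)/(1-t) ∈ Z }`. -/
noncomputable def weight {V : Type*} [AddCommGroup V] [Module ℝ V] (Z : Set V) (y x : V) : ℝ :=
  sSup {t : ℝ | 0 ≤ t ∧ t < 1 ∧ (1 - t)⁻¹ • (y - t • x) ∈ Z}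

theorem weight_eq_inv_one_add_gauge {V : Type*} [AddCommGroup V] [Module ℝ V]
    (Z : Set V) (hZ : Convex ℝ Z) (y : V) (hy : y ∈ Z)
    (hinner : ∀ x ∈ Z, 0 < weight Z y x)
    (x : V) (hx : x ∈ Z) :
    weight Z y x = 1 / (1 + gauge ((fun z => z - y) '' Z) (y - x)) := by
  set A := (fun z => z - y) '' Z with hA
  set w := y - x with hwdef
  set g := gauge A w with hgdef
  have hg0 : 0 ≤ g := gauge_nonneg _
  have h1g : (0:ℝ) < 1 + g := by linarith
  set S := {t : ℝ | 0 ≤ t ∧ t < 1 ∧ (1 - t)⁻¹ • (y - t • x) ∈ Z} with hSdef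
  have h0S : (0:ℝ) ∈ S := by
    refine ⟨le_refl 0, by norm_num, ?_⟩
    simpa using hy
  have hSne : S.Nonempty := ⟨0, h0S⟩
  have hbdd : BddAbove S := ⟨1, fun t ht => le_of_lt ht.2.1⟩
  -- membership in A
  have hAmem : ∀ v : V, v ∈ A ↔ y + v ∈ Z := by
    intro v
    constructor
    · rintro ⟨z, hz, rfl⟩; simpa using hz
    · intro h; exact ⟨y + v, h, by simp⟩
  -- rewriting the defining point
  have key : ∀ t : ℝ, t < 1 → (1 - t)⁻¹ • (y - t • x) = y + (t / (1 - t)) • w := by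
    intro t ht1
    have h1t : (1 : ℝ) - t ≠ 0 := by intro h; linarith [h]
    rw [hwdef]
    match_scalars <;> field_simp <;> ring
  -- downward closure along the ray
  have hdown : ∀ s' s : ℝ, 0 ≤ s' → s' ≤ s → y + s • w ∈ Z → y + s' • w ∈ Z := by
    intro s' s hs' hss h
    rcases eq_or_lt_of_le (hs'.trans hss) with hs0 | hs0
    · have hs'0 : s' = 0 := le_antisymm (by linarith [hss, hs0]) hs'
      rw [hs'0]; simpa using hy
    · have hab : s' / s + (1 - s' / s) = 1 := by ring
      have ha : 0 ≤ s' / s := div_nonneg hs' hs0.le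
      have hb : 0 ≤ 1 - s' / s := by
        have : s' / s ≤ 1 := (div_le_one hs0).2 hss
        linarith
      have hcomb := hZ h hy ha hb hab
      convert hcomb using 1
      match_scalars <;> field_simp <;> ring
  -- gauge as an infimum
  have hgauge : g = sInf {r : ℝ | r ∈ Set.Ioi (0:ℝ) ∧ r⁻¹ • w ∈ A} := by
    rw [hgdef, gauge_def']
  set R := {r : ℝ | r ∈ Set.Ioi (0:ℝ) ∧ r⁻¹ • w ∈ A} with hRdef
  -- R is nonempty, from hinner
  have hwpos : 0 < sSup S := hinner x hx
  obtain ⟨t₀, ht₀S, ht₀⟩ := exists_lt_of_lt_csSup hSne hwpos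
  obtain ⟨ht₀0, ht₀1, ht₀Z⟩ := ht₀S
  have hs₀ : 0 < t₀ / (1 - t₀) := div_pos ht₀ (by linarith)
  have hr₀R : (t₀ / (1 - t₀))⁻¹ ∈ R := by
    refine ⟨by simpa using inv_pos.2 hs₀, ?_⟩
    rw [inv_inv, hAmem]
    rw [key t₀ ht₀1] at ht₀Z
    exact ht₀Z
  have hRne : R.Nonempty := ⟨_, hr₀R⟩
  -- conclude
  show sSup S = 1 / (1 + g)
  apply le_antisymm
  · apply csSup_le hSne
    intro t htS
    obtain ⟨ht0, ht1, htZ⟩ := htS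
    rcases eq_or_lt_of_le ht0 with h0 | h0
    · rw [← h0]; positivity
    · have hs : 0 < t / (1 - t) := div_pos h0 (by linarith)
      rw [key t ht1] at htZ
      have hRbdd : BddBelow R := ⟨0, fun r hr => le_of_lt hr.1⟩
      have hmemR : (t / (1 - t))⁻¹ ∈ R := by
        refine ⟨by simpa using inv_pos.2 hs, ?_⟩
        rw [inv_inv, hAmem]
        exact htZ
      have hgle : g ≤ (t / (1 - t))⁻¹ := by rw [hgauge]; exact csInf_le hRbdd hmemR
      rw [inv_div] at hgle
      have : g * t ≤ 1 - t := by
        have := (le_div_iff₀ h0).1 hgle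
        linarith
      rw [le_div_iff₀ h1g]
      nlinarith
  · by_contra hlt
    push_neg at hlt
    have hSup0 : 0 ≤ sSup S := le_csSup hbdd h0S
    set t := (sSup S + 1 / (1 + g)) / 2 with htdef
    have htpos : 0 < t := by
      have : 0 < 1 / (1 + g) := by positivity
      rw [htdef]; linarith
    have htlt : t < 1 / (1 + g) := by rw [htdef]; linarith
    have htgt : sSup S < t := by rw [htdef]; linarith
    have ht1 : t < 1 := by
      have : 1 / (1 + g) ≤ 1 := by
        rw [div_le_one h1g]; linarith
      linarith
    have hs : 0 < t / (1 - t) := div_pos htpos (by linarith)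
    -- g < (1-t)/t
    have hglt : g < (t / (1 - t))⁻¹ := by
      rw [inv_div, lt_div_iff₀ htpos]
      have := (lt_div_iff₀ h1g).1 htlt
      nlinarith
    obtain ⟨r, hrR, hrlt⟩ := by
      have : sInf R < (t / (1 - t))⁻¹ := by rw [← hgauge]; exact hglt
      exact exists_lt_of_csInf_lt hRne this
    obtain ⟨hrpos, hrA⟩ := hrR
    have hrpos' : (0:ℝ) < r := hrpos
    have hsle : t / (1 - t) ≤ r⁻¹ := by
      have h1 : r * (t / (1 - t)) < 1 := by
        have := mul_lt_mul_of_pos_left hrlt hs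
        rwa [mul_inv_cancel₀ hs.ne', mul_comm] at this
      rw [← one_div, le_div_iff₀ hrpos']
      nlinarith
    have hmemZ : y + (r⁻¹) • w ∈ Z := by
      rw [← hAmem]; exact hrA
    have htS : t ∈ S := by
      refine ⟨htpos.le, ht1, ?_⟩
      rw [key t ht1]
      exact hdown _ _ hs.le hsle hmemZ
    exact absurd (le_csSup hbdd htS) (not_le.2 htgt)
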